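/- Let J ∈ ℝ^{n×n}, and let B_0, B_1, …, s_0, s_1, … be generated by the AA-I update B_{t+1} = B_t + (J − B_t) s_t (P_t^⊥ s_t)ᵀ / ((P_t^⊥ s_t)ᵀ s_t), where P_t is the orthogonal projection onto span(s_0, …, s_{t−1}) (P_0 = 0), P_t^⊥ = I − P_t, and s_0, …, s_k are linearly independent. Then: (a) (B_{t+1} − J) s_i = 0 for all 0 ≤ i ≤ t ≤ k; (b) (J − B_t) P_t^⊥ = J − B_t for all t ≤ k; and consequently (c) rank(B_t − J) ≤ n − t for all t ≤ k+1. -/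

import Mathlib

open Matrix MeasureTheory ProbabilityTheory Finset

/-- Euclidean norm of a vector in ℝⁿ. -/
noncomputable def enorm' {n : ℕ} (v : Fin n → ℝ) : ℝ := Real.sqrt (∑ i, (v i) ^ 2)

/-- Frobenius norm of a real n×n matrix. -/
noncomputable def frob {n : ℕ} (A : Matrix (Fin n) (Fin n) ℝ) : ℝ :=
  Real.sqrt (∑ i, ∑ j, (A i j) ^ 2)

/-- Spectral (ℓ₂ operator) norm of a real n×n matrix. -/
noncomputable def opNorm' {n : ℕ} (A : Matrix (Fin n) (Fin n) ℝ) : ℝ :=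
  ‖Matrix.toEuclideanCLM (𝕜 := ℝ) A‖

/-- The AAA update: AAA(B,J,s) = B + ((J−B) s sᵀ (J−B)ᵀ / (sᵀ(J−B)ᵀ(J−B)s)) (J−B)
if (J−B)s ≠ 0, and B otherwise. -/
noncomputable def AAAupd {n : ℕ} (B J : Matrix (Fin n) (Fin n) ℝ) (s : Fin n → ℝ) :
    Matrix (Fin n) (Fin n) ℝ :=
  if (J - B).mulVec s = 0 then B
  else B + (((J - B).mulVec s) ⬝ᵥ ((J - B).mulVec s))⁻¹ •
      (Matrix.vecMulVec ((J - B).mulVec s) ((J - B).mulVec s) * (J - B))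

/-- `s` is a standard basis vector maximizing ‖R e_i‖ over the standard basis. -/
noncomputable def IsGreedy {n : ℕ} (R : Matrix (Fin n) (Fin n) ℝ) (s : Fin n → ℝ) : Prop :=
  ∃ i : Fin n, s = Pi.single i 1 ∧
    ∀ j : Fin n, enorm' (R.mulVec (Pi.single j 1)) ≤ enorm' (R.mulVec (Pi.single i 1))

/-- `P` is the orthogonal-projection matrix onto the subspace `V` of ℝⁿ
(symmetric, idempotent, range `V`, identity on `V`). -/
def IsOrthProj {n : ℕ} (P : Matrix (Fin n) (Fin n) ℝ) (V : Submodule ℝ (Fin n → ℝ)) : Prop :=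
  P.IsSymm ∧ P * P = P ∧ (∀ v, P.mulVec v ∈ V) ∧ (∀ v ∈ V, P.mulVec v = v)

/-- Standard Gaussian measure on ℝⁿ: the n-fold product of N(0,1). -/
noncomputable def stdGaussianPi (n : ℕ) : MeasureTheory.Measure (Fin n → ℝ) :=
  MeasureTheory.Measure.pi fun _ => ProbabilityTheory.gaussianReal 0 1

/-- rank-one matrix acting on a vector -/
lemma vecMulVec_mulVec' {n : ℕ} (u w x : Fin n → ℝ) :
    (Matrix.vecMulVec u w).mulVec x = (w ⬝ᵥ x) • u := by
  ext i
  simp [Matrix.vecMulVec, Matrix.mulVec, dotProduct, Finset.mul_sum, Finset.sum_mul,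
    mul_comm, mul_assoc, mul_left_comm]

lemma symm_mulVec_dot {n : ℕ} {A : Matrix (Fin n) (Fin n) ℝ} (hA : A.IsSymm)
    (x y : Fin n → ℝ) : A.mulVec x ⬝ᵥ y = x ⬝ᵥ A.mulVec y := by
  rw [Matrix.dotProduct_mulVec, ← Matrix.vecMul_transpose, hA.eq]

theorem stmt_8 {n : ℕ} (J : Matrix (Fin n) (Fin n) ℝ)
    (B : ℕ → Matrix (Fin n) (Fin n) ℝ) (s : ℕ → Fin n → ℝ)
    (P : ℕ → Matrix (Fin n) (Fin n) ℝ) (k : ℕ)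
    (hP : ∀ t ≤ k, IsOrthProj (P t) (Submodule.span ℝ (s '' Set.Iio t)))
    (hBup : ∀ t ≤ k, B (t + 1) = B t +
      ((((1 : Matrix (Fin n) (Fin n) ℝ) - P t).mulVec (s t)) ⬝ᵥ (s t))⁻¹ •
        Matrix.vecMulVec ((J - B t).mulVec (s t))
          (((1 : Matrix (Fin n) (Fin n) ℝ) - P t).mulVec (s t)))
    (hindep : LinearIndependent ℝ (fun i : Fin (k + 1) => s i)) :
    (∀ i t : ℕ, i ≤ t → t ≤ k → (B (t + 1) - J).mulVec (s i) = 0) ∧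
    (∀ t ≤ k, (J - B t) * ((1 : Matrix (Fin n) (Fin n) ℝ) - P t) = J - B t) ∧
    (∀ t ≤ k + 1, (B t - J).rank ≤ n - t) := by
  -- notation
  set Q : ℕ → Matrix (Fin n) (Fin n) ℝ := fun t => 1 - P t with hQ
  have hQsymm : ∀ t ≤ k, (Q t).IsSymm := by
    intro t ht
    have h := (hP t ht).1
    simp only [Matrix.IsSymm, hQ, Matrix.transpose_sub, Matrix.transpose_one, h.eq]
  have hQidem : ∀ t ≤ k, Q t * Q t = Q t := by
    intro t ht
    have h := (hP t ht).2.1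
    simp only [hQ, Matrix.sub_mul, Matrix.mul_sub, Matrix.one_mul, Matrix.mul_one, h]
    abel
  -- s i is fixed by P t for i < t
  have hfix : ∀ t ≤ k, ∀ i < t, (P t).mulVec (s i) = s i := by
    intro t ht i hi
    exact (hP t ht).2.2.2 (s i) (Submodule.subset_span ⟨i, hi, rfl⟩)
  -- orthogonality: Q t s_t ⬝ s_i = 0 for i < t
  have horth : ∀ t ≤ k, ∀ i < t, (Q t).mulVec (s t) ⬝ᵥ s i = 0 := by
    intro t ht i hi
    rw [symm_mulVec_dot (hQsymm t ht)]
    have : (Q t).mulVec (s i) = 0 := by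
      simp [hQ, Matrix.sub_mulVec, hfix t ht i hi]
    rw [this, dotProduct_zero]
  -- s t not in the span of earlier s's
  have hnotmem : ∀ t ≤ k, s t ∉ Submodule.span ℝ (s '' Set.Iio t) := by
    intro t ht hmem
    have himg : s '' Set.Iio t =
        (fun i : Fin (k + 1) => s i) '' {i : Fin (k + 1) | (i : ℕ) < t} := by
      ext y
      constructor
      · rintro ⟨i, hi, rfl⟩
        have hi' : i < t := hi
        exact ⟨⟨i, by omega⟩, by simpa using hi', rfl⟩
      · rintro ⟨i, hi, rfl⟩
        exact ⟨i, hi, rfl⟩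
    have hne : (⟨t, by omega⟩ : Fin (k + 1)) ∉ {i : Fin (k + 1) | (i : ℕ) < t} := by
      simp
    have := hindep.notMem_span_image hne
    rw [himg] at hmem
    exact this hmem
  -- Q t s_t ≠ 0
  have hQne : ∀ t ≤ k, (Q t).mulVec (s t) ≠ 0 := by
    intro t ht h0
    apply hnotmem t ht
    have h2 : (P t).mulVec (s t) = s t := by
      have := sub_eq_zero.mp (by simpa [hQ, Matrix.sub_mulVec] using h0)
      simpa using this.symm
    rw [← h2]
    exact (hP t ht).2.2.1 (s t)
  -- the denominator is nonzero
  have hcne : ∀ t ≤ k, (Q t).mulVec (s t) ⬝ᵥ s t ≠ 0 := by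
    intro t ht
    have : (Q t).mulVec (s t) ⬝ᵥ s t = (Q t).mulVec (s t) ⬝ᵥ (Q t).mulVec (s t) := by
      conv_lhs => rw [← hQidem t ht, ← Matrix.mulVec_mulVec,
        symm_mulVec_dot (hQsymm t ht)]
    rw [this]
    exact fun h => hQne t ht (dotProduct_self_eq_zero.mp h)
  -- part (a), strengthened
  have key : ∀ t ≤ k + 1, ∀ i < t, (B t - J).mulVec (s i) = 0 := by
    intro t
    induction t with
    | zero => intro _ i hi; omega
    | succ t ih =>
      intro ht i hi
      have htk : t ≤ k := by omega
      rw [hBup t htk, add_sub_right_comm, Matrix.add_mulVec, Matrix.smul_mulVec,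
        vecMulVec_mulVec']
      rcases Nat.lt_or_ge i t with hlt | hge
      · rw [ih (by omega) i hlt, horth t htk i hlt]
        simp
      · have hit : i = t := by omega
        subst hit
        have hJB : (J - B i).mulVec (s i) = -(B i - J).mulVec (s i) := by
          rw [← Matrix.neg_mulVec, neg_sub]
        rw [hJB, smul_neg, smul_neg, smul_smul,
          inv_mul_cancel₀ (hcne i htk), one_smul]
        simp
  -- part (b)
  have partb : ∀ t ≤ k, (J - B t) * ((1 : Matrix (Fin n) (Fin n) ℝ) - P t) = J - B t := by
    intro t ht
    have hker : Submodule.span ℝ (s '' Set.Iio t) ≤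
        LinearMap.ker (J - B t).mulVecLin := by
      rw [Submodule.span_le]
      rintro x ⟨i, hi, rfl⟩
      have h := key t (by omega) i hi
      have : (J - B t).mulVec (s i) = 0 := by
        rw [← neg_sub (B t) J, Matrix.neg_mulVec, h, neg_zero]
      simpa [LinearMap.mem_ker, Matrix.sub_mulVec] using this
    have hzero : (J - B t) * P t = 0 := by
      ext i j
      have hm : (P t).mulVec (Pi.single j 1) ∈ Submodule.span ℝ (s '' Set.Iio t) :=
        (hP t ht).2.2.1 _
      have h0 : (J - B t).mulVec ((P t).mulVec (Pi.single j 1)) = 0 := by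
        have := hker hm
        simpa [LinearMap.mem_ker, Matrix.sub_mulVec] using this
      rw [Matrix.mulVec_mulVec] at h0
      have := congrFun h0 i
      simpa [Matrix.mulVec_single] using this
    rw [Matrix.mul_sub, Matrix.mul_one, hzero, sub_zero]
  refine ⟨fun i t hit htk => key (t + 1) (by omega) i (by omega), partb, ?_⟩
  -- part (c)
  intro t ht
  set A := B t - J with hA
  have hli : LinearIndependent ℝ (fun i : Fin t => s i) := by
    have hinj : Function.Injective (fun i : Fin t => (⟨i, by omega⟩ : Fin (k + 1))) := by
      intro a b hab
      have : (a : ℕ) = b := by simpa [Fin.ext_iff] using hab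
      exact Fin.ext this
    exact hindep.comp _ hinj
  have hspanle : Submodule.span ℝ (Set.range fun i : Fin t => s i) ≤
      LinearMap.ker A.mulVecLin := by
    rw [Submodule.span_le]
    rintro x ⟨i, rfl⟩
    simpa [LinearMap.mem_ker] using key t ht i i.2
  have hdim : t ≤ Module.finrank ℝ (LinearMap.ker A.mulVecLin) := by
    have h1 : Module.finrank ℝ (Submodule.span ℝ (Set.range fun i : Fin t => s i)) = t := by
      rw [finrank_span_eq_card hli, Fintype.card_fin]
    calc t = Module.finrank ℝ (Submodule.span ℝ (Set.range fun i : Fin t => s i)) := h1.symm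
      _ ≤ Module.finrank ℝ (LinearMap.ker A.mulVecLin) := Submodule.finrank_mono hspanle
  have hrn : A.rank + Module.finrank ℝ (LinearMap.ker A.mulVecLin) = n := by
    have := LinearMap.finrank_range_add_finrank_ker A.mulVecLin
    rw [Module.finrank_fin_fun] at this
    exact this
  omega
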